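/- Fix z ∈ ℝ and let z_π = z mod π ∈ [0, π). Then, as q → 1⁻ (with q ∈ (0,1)), the ratio ϑ₃(z,q) / [ √(π/log(1/q)) · ( exp(z_π²/log q) + exp((π − z_π)²/log q) ) ] tends to 1. -/

import Mathlib

open Filter Topology Real Complex

/-- The Jacobi theta function `ϑ₃(z,q) = ∑_{n ∈ ℤ} q^{n²} e^{2inz}`. -/
noncomputable def jacobiTheta3 (z q : ℝ) : ℂ :=
  ∑' n : ℤ, (q : ℂ) ^ (n ^ 2) * Complex.exp (2 * Complex.I * (n : ℂ) * (z : ℂ))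

private def kExp (n : ℤ) : ℕ := (if n ≤ 0 then -n else n - 1).toNat

private lemma aux_exp_bound {x c K : ℝ} (hc : 0 < c) (hx : 0 ≤ x) (hK : 0 ≤ K)
    (hKK : K ≤ K ^ 2) :
    Real.exp (-(x + Real.pi * K) ^ 2 / c) ≤
      Real.exp (-x ^ 2 / c) * Real.exp (K * (-Real.pi ^ 2 / c)) := by
  have hπ := Real.pi_pos
  rw [← Real.exp_add, Real.exp_le_exp,
    show -x ^ 2 / c + K * (-Real.pi ^ 2 / c) = (-x ^ 2 + K * (-Real.pi ^ 2)) / c by ring]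
  gcongr
  nlinarith [mul_nonneg hx hK, sq_nonneg (Real.pi * K), mul_nonneg (mul_nonneg hπ.le hK) hx]

private lemma pt_bound {zpi c : ℝ} (hc : 0 < c) (h0 : 0 ≤ zpi) (h1 : zpi < Real.pi) (n : ℤ) :
    Real.exp (-(zpi - Real.pi * n) ^ 2 / c) ≤
      (Real.exp (-zpi ^ 2 / c) + Real.exp (-(Real.pi - zpi) ^ 2 / c)) *
        Real.exp (-Real.pi ^ 2 / c) ^ kExp n := by
  have hπ := Real.pi_pos
  rw [← Real.exp_nat_mul]
  rcases le_or_gt n 0 with hn | hn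
  · have hcast : ((kExp n : ℕ) : ℝ) = -(n : ℝ) := by
      simp only [kExp, if_pos hn]
      have h := Int.toNat_of_nonneg (show (0:ℤ) ≤ -n by omega)
      exact_mod_cast congrArg (fun x : ℤ => (x:ℝ)) h
    have hK : (0:ℝ) ≤ -(n:ℝ) := by exact_mod_cast neg_nonneg.mpr hn
    have hKK : -(n:ℝ) ≤ (-(n:ℝ)) ^ 2 := by
      have h : -n ≤ (-n) ^ 2 := by nlinarith [sq_nonneg (n + 1)]
      exact_mod_cast h
    calc Real.exp (-(zpi - Real.pi * n) ^ 2 / c)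
        = Real.exp (-(zpi + Real.pi * (-(n:ℝ))) ^ 2 / c) := by ring_nf
      _ ≤ Real.exp (-zpi ^ 2 / c) * Real.exp (-(n:ℝ) * (-Real.pi ^ 2 / c)) :=
          aux_exp_bound hc h0 hK hKK
      _ ≤ (Real.exp (-zpi ^ 2 / c) + Real.exp (-(Real.pi - zpi) ^ 2 / c)) *
            Real.exp ((kExp n : ℕ) * (-Real.pi ^ 2 / c)) := by
          rw [hcast]
          exact mul_le_mul_of_nonneg_right (le_add_of_nonneg_right (Real.exp_nonneg _))
            (Real.exp_nonneg _)
  · have hcast : ((kExp n : ℕ) : ℝ) = (n : ℝ) - 1 := by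
      simp only [kExp, if_neg (not_le.mpr hn)]
      have h := Int.toNat_of_nonneg (show (0:ℤ) ≤ n - 1 by omega)
      have h2 := congrArg (fun x : ℤ => (x:ℝ)) h
      push_cast at h2
      exact_mod_cast h2
    have hK : (0:ℝ) ≤ (n:ℝ) - 1 := by
      have h : (1:ℝ) ≤ (n:ℝ) := by exact_mod_cast hn
      linarith
    have hKK : (n:ℝ) - 1 ≤ ((n:ℝ) - 1) ^ 2 := by
      have h : n - 1 ≤ (n - 1) ^ 2 := by nlinarith [sq_nonneg (n - 2)]
      exact_mod_cast h
    calc Real.exp (-(zpi - Real.pi * n) ^ 2 / c)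
        = Real.exp (-((Real.pi - zpi) + Real.pi * ((n:ℝ) - 1)) ^ 2 / c) := by ring_nf
      _ ≤ Real.exp (-(Real.pi - zpi) ^ 2 / c) * Real.exp (((n:ℝ) - 1) * (-Real.pi ^ 2 / c)) :=
          aux_exp_bound hc (by linarith) hK hKK
      _ ≤ (Real.exp (-zpi ^ 2 / c) + Real.exp (-(Real.pi - zpi) ^ 2 / c)) *
            Real.exp ((kExp n : ℕ) * (-Real.pi ^ 2 / c)) := by
          rw [hcast]
          exact mul_le_mul_of_nonneg_right (le_add_of_nonneg_left (Real.exp_nonneg _))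
            (Real.exp_nonneg _)

private lemma summable_W {r : ℝ} (h0 : 0 ≤ r) (h1 : r < 1) :
    Summable (fun n : ℤ => r ^ kExp n) := by
  rw [summable_int_iff_summable_nat_and_neg]
  constructor
  · apply (summable_nat_add_iff 1).mp
    apply (summable_geometric_of_lt_one h0 h1).congr
    intro j
    congr 1
    simp only [kExp]
    rw [if_neg (by omega)]
    omega
  · apply (summable_geometric_of_lt_one h0 h1).congr
    intro j
    congr 1
    simp only [kExp]
    rw [if_pos (by omega)]
    omega

private lemma hasSum_V {r : ℝ} (h0 : 0 ≤ r) (h1 : r < 1) :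
    HasSum (fun n : ℤ => if n = 1 then 0 else if n = 0 then 0 else r ^ kExp n)
      (2 * (r / (1 - r))) := by
  set V : ℤ → ℝ := fun n => if n = 1 then 0 else if n = 0 then 0 else r ^ kExp n with hV
  have hg : HasSum (fun j : ℕ => r ^ (j + 1)) (r / (1 - r)) := by
    have he : (fun i : ℕ => r * r ^ i) = fun j : ℕ => r ^ (j + 1) := by
      funext j; rw [pow_succ, mul_comm]
    have h := (hasSum_geometric_of_lt_one h0 h1).mul_left r
    rw [← he, div_eq_mul_inv]
    exact h
  have hpos : HasSum (fun j : ℕ => V (j : ℤ)) (r / (1 - r)) := by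
    have h3 : HasSum (fun j : ℕ => V ((j + 2 : ℕ) : ℤ)) (r / (1 - r)) := by
      have he : (fun j : ℕ => V ((j + 2 : ℕ) : ℤ)) = fun j : ℕ => r ^ (j + 1) := by
        funext j
        simp only [hV]
        rw [if_neg (by omega), if_neg (by omega)]
        congr 1
        simp only [kExp]
        rw [if_neg (by omega)]
        omega
      rw [he]; exact hg
    have h4 := (hasSum_nat_add_iff (f := fun j : ℕ => V (j : ℤ)) 2).mp h3
    have h5 : (∑ i ∈ Finset.range 2, V (i : ℤ)) = 0 := by
      simp [Finset.sum_range_succ, hV]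
    rw [h5, add_zero] at h4
    exact h4
  have hneg : HasSum (fun j : ℕ => V (-((j : ℤ) + 1))) (r / (1 - r)) := by
    have he : (fun j : ℕ => V (-((j : ℤ) + 1))) = fun j : ℕ => r ^ (j + 1) := by
      funext j
      simp only [hV]
      rw [if_neg (by omega), if_neg (by omega)]
      have hk : kExp (-((j : ℤ) + 1)) = j + 1 := by
        simp only [kExp]
        rw [if_pos (by omega)]
        omega
      rw [hk]
    rw [he]; exact hg
  have h := HasSum.of_nat_of_neg_add_one hpos hneg
  convert h using 1
  ring

private lemma real_limit {zpi : ℝ} (h0 : 0 ≤ zpi) (h1 : zpi < Real.pi) :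
    Tendsto (fun c : ℝ =>
      (∑' n : ℤ, Real.exp (-(zpi - Real.pi * n) ^ 2 / c)) /
        (Real.exp (-zpi ^ 2 / c) + Real.exp (-(Real.pi - zpi) ^ 2 / c)))
      (𝓝[>] (0:ℝ)) (𝓝 1) := by
  have hπ := Real.pi_pos
  set F := fun c : ℝ =>
      (∑' n : ℤ, Real.exp (-(zpi - Real.pi * n) ^ 2 / c)) /
        (Real.exp (-zpi ^ 2 / c) + Real.exp (-(Real.pi - zpi) ^ 2 / c)) with hF
  have key : ∀ c ∈ Set.Ioi (0:ℝ),
      1 ≤ F c ∧ F c ≤ 1 + 2 * (Real.exp (-Real.pi ^ 2 / c) /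
        (1 - Real.exp (-Real.pi ^ 2 / c))) := by
    intro c hc
    rw [Set.mem_Ioi] at hc
    set r := Real.exp (-Real.pi ^ 2 / c) with hr
    have hr0 : 0 < r := Real.exp_pos _
    have hr1 : r < 1 := by
      rw [hr, ← Real.exp_zero]
      apply Real.exp_lt_exp.mpr
      have : 0 < Real.pi ^ 2 / c := by positivity
      rw [neg_div]
      linarith
    set D := Real.exp (-zpi ^ 2 / c) + Real.exp (-(Real.pi - zpi) ^ 2 / c) with hD
    have hDpos : 0 < D := by positivity
    set f := fun n : ℤ => Real.exp (-(zpi - Real.pi * n) ^ 2 / c) with hf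
    have hb : ∀ n, f n ≤ D * r ^ kExp n := fun n => pt_bound hc h0 h1 n
    have hWs : Summable (fun n : ℤ => D * r ^ kExp n) := (summable_W hr0.le hr1).mul_left D
    have hfs : Summable f := Summable.of_nonneg_of_le (fun n => Real.exp_nonneg _) hb hWs
    have hg1 : Summable (fun n : ℤ => if n = 0 then 0 else f n) :=
      Summable.of_nonneg_of_le (fun n => by split_ifs <;> simp [hf, Real.exp_nonneg])
        (fun n => by split_ifs <;> simp [hf, Real.exp_nonneg]) hfs
    have e1 := Summable.tsum_eq_add_tsum_ite hfs 0
    have e2 := Summable.tsum_eq_add_tsum_ite hg1 1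
    set T := ∑' n : ℤ, (if n = 1 then 0 else if n = 0 then 0 else f n) with hT
    have hV := hasSum_V hr0.le hr1
    have hg2 : Summable (fun n : ℤ => if n = 1 then 0 else if n = 0 then 0 else f n) :=
      Summable.of_nonneg_of_le
        (fun n => by split_ifs <;> simp [hf, Real.exp_nonneg])
        (fun n => by
          split_ifs with h1' h2'
          · positivity
          · positivity
          · exact hb n)
        ((hV.summable).mul_left D)
    have hT0 : 0 ≤ T := tsum_nonneg fun n => by split_ifs <;> simp [hf, Real.exp_nonneg]
    have hTle : T ≤ D * (2 * (r / (1 - r))) := by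
      have step : T ≤ ∑' n : ℤ, D * (if n = 1 then 0 else if n = 0 then 0 else r ^ kExp n) := by
        apply Summable.tsum_le_tsum _ hg2 (hV.summable.mul_left D)
        intro n
        split_ifs with h1' h2'
        · simp
        · simp
        · exact hb n
      calc T ≤ _ := step
        _ = D * (2 * (r / (1 - r))) := (hV.mul_left D).tsum_eq
    have hS : (∑' n : ℤ, f n) = D + T := by
      rw [e1, e2]
      have hf0 : f 0 = Real.exp (-zpi ^ 2 / c) := by simp [hf]
      have hf1 : (if (1:ℤ) = 0 then (0:ℝ) else f 1) = Real.exp (-(Real.pi - zpi) ^ 2 / c) := by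
        rw [if_neg one_ne_zero, hf]
        norm_num
        congr 1
        ring
      rw [hf0, hf1, hD]
      ring
    constructor
    · rw [hF]
      simp only
      rw [← hf, ← hD] at *
      rw [hS, add_div, div_self hDpos.ne']
      have : 0 ≤ T / D := div_nonneg hT0 hDpos.le
      linarith
    · rw [hF]
      simp only
      rw [← hf, ← hD] at *
      rw [hS, div_le_iff₀ hDpos]
      calc D + T ≤ D + D * (2 * (r / (1 - r))) := by linarith
        _ = (1 + 2 * (r / (1 - r))) * D := by ring
  have hrlim : Tendsto (fun c : ℝ => Real.exp (-Real.pi ^ 2 / c)) (𝓝[>] (0:ℝ)) (𝓝 0) := by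
    have h1 : Tendsto (fun c : ℝ => Real.pi ^ 2 * c⁻¹) (𝓝[>] (0:ℝ)) atTop :=
      Tendsto.const_mul_atTop (by positivity) tendsto_inv_nhdsGT_zero
    have h2 : Tendsto (fun c : ℝ => -Real.pi ^ 2 / c) (𝓝[>] (0:ℝ)) atBot := by
      have he : (fun c : ℝ => -Real.pi ^ 2 / c) = fun c : ℝ => -(Real.pi ^ 2 * c⁻¹) := by
        funext c; ring
      rw [he]
      exact tendsto_neg_atTop_atBot.comp h1
    exact Real.tendsto_exp_atBot.comp h2
  have hupper : Tendsto (fun c : ℝ => 1 + 2 * (Real.exp (-Real.pi ^ 2 / c) /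
      (1 - Real.exp (-Real.pi ^ 2 / c)))) (𝓝[>] (0:ℝ)) (𝓝 1) := by
    have hone : Tendsto (fun _ : ℝ => (1:ℝ)) (𝓝[>] (0:ℝ)) (𝓝 1) := tendsto_const_nhds
    have hdiv := Tendsto.div hrlim (hone.sub hrlim) (by norm_num)
    have h := (hdiv.const_mul (2:ℝ)).const_add (1:ℝ)
    convert h using 2
    all_goals norm_num
  refine tendsto_of_tendsto_of_tendsto_of_le_of_le' tendsto_const_nhds hupper ?_ ?_
  · filter_upwards [self_mem_nhdsWithin] with c hc
    exact (key c hc).1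
  · filter_upwards [self_mem_nhdsWithin] with c hc
    exact (key c hc).2

private lemma theta3_eq (z : ℝ) {q : ℝ} (hq0 : 0 < q) (hq1 : q < 1) :
    jacobiTheta3 z q = ((Real.sqrt (Real.pi / Real.log (1/q)) *
        ∑' n : ℤ, Real.exp (-(z - Real.pi * n) ^ 2 / Real.log (1/q)) : ℝ) : ℂ) := by
  have hπ : (Real.pi : ℂ) ≠ 0 := by exact_mod_cast Real.pi_ne_zero
  have hc : 0 < Real.log (1/q) := Real.log_pos (by rw [one_lt_div hq0]; exact hq1)
  set c := Real.log (1/q) with hcdef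
  have hc' : (c : ℂ) ≠ 0 := by exact_mod_cast hc.ne'
  have step1 : jacobiTheta3 z q
      = jacobiTheta₂ (z / Real.pi) ((c / Real.pi : ℝ) * Complex.I) := by
    unfold jacobiTheta3 jacobiTheta₂ jacobiTheta₂_term
    refine tsum_congr fun n => ?_
    have h1 : (q : ℂ) ^ (n ^ 2) = Complex.exp ((n ^ 2 : ℤ) * Real.log q) := by
      rw [← Complex.ofReal_intCast, ← Complex.ofReal_mul, ← Real.log_zpow,
        ← Complex.ofReal_exp, Real.exp_log (by positivity)]
      push_cast
      ring
    rw [h1, ← Complex.exp_add]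
    congr 1
    have hlog : (c : ℂ) = -(Real.log q : ℂ) := by
      rw [hcdef, one_div, Real.log_inv]; push_cast; ring
    push_cast [hlog]
    field_simp
    ring_nf
    simp [Complex.I_sq]
  have step2 : jacobiTheta₂ (z / Real.pi) ((c / Real.pi : ℝ) * Complex.I)
      = ((Real.sqrt (Real.pi / c) : ℝ) : ℂ) *
        ∑' n : ℤ, ((Real.exp (-(z - Real.pi * n) ^ 2 / c) : ℝ) : ℂ) := by
    have hπ' : (0:ℝ) < Real.pi := Real.pi_pos
    rw [jacobiTheta₂_functional_equation]
    have hτ : -Complex.I * (((c / Real.pi : ℝ) : ℂ) * Complex.I) = ((c / Real.pi : ℝ) : ℂ) := by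
      ring_nf
      simp [Complex.I_sq]
    rw [hτ]
    have h2 : (((c / Real.pi : ℝ) : ℂ)) ^ (1/2 : ℂ) = ((Real.sqrt (c / Real.pi) : ℝ) : ℂ) := by
      rw [show (1/2 : ℂ) = ((1/2 : ℝ) : ℂ) by norm_num,
        ← Complex.ofReal_cpow (by positivity)]
      rw [Real.sqrt_eq_rpow]
    rw [h2]
    have hsq : ((Real.sqrt (Real.pi / c) : ℝ) : ℂ) = 1 / ((Real.sqrt (c / Real.pi) : ℝ) : ℂ) := by
      rw [show Real.pi / c = (c / Real.pi)⁻¹ by field_simp, Real.sqrt_inv]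
      push_cast
      rw [one_div]
    rw [hsq]
    unfold jacobiTheta₂ jacobiTheta₂_term
    rw [mul_assoc, ← tsum_mul_left]
    congr 1
    refine tsum_congr fun n => ?_
    rw [← Complex.exp_add, Complex.ofReal_exp]
    congr 1
    push_cast
    field_simp [Complex.I_ne_zero]
    ring_nf
  rw [step1, step2, Complex.ofReal_mul, Complex.ofReal_tsum]

/-- Asymptotic form of `ϑ₃` near `q = 1`: with `z_π = z mod π`,
the ratio `ϑ₃(z,q) / (√(π/log(1/q)) (e^{z_π²/log q} + e^{(π-z_π)²/log q}))` tends
to `1` as `q → 1⁻`. -/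
theorem jacobiTheta3_asymptotic (z : ℝ) (zpi : ℝ)
    (hzpi : zpi = z - Real.pi * (⌊z / Real.pi⌋ : ℤ)) :
    Tendsto (fun q : ℝ =>
        jacobiTheta3 z q /
          ((Real.sqrt (Real.pi / Real.log (1 / q)) *
              (Real.exp (zpi ^ 2 / Real.log q) +
                Real.exp ((Real.pi - zpi) ^ 2 / Real.log q)) : ℝ) : ℂ))
      (𝓝[Set.Ioo (0 : ℝ) 1] 1) (𝓝 1) := by
  have hπ := Real.pi_pos
  set m : ℤ := ⌊z / Real.pi⌋ with hm
  have h0 : 0 ≤ zpi := by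
    rw [hzpi]
    have h := Int.floor_le (z / Real.pi)
    rw [le_div_iff₀ hπ] at h
    linarith
  have h1 : zpi < Real.pi := by
    rw [hzpi]
    have h := Int.lt_floor_add_one (z / Real.pi)
    rw [div_lt_iff₀ hπ] at h
    push_cast at h ⊢
    linarith
  have hc_tendsto : Tendsto (fun q : ℝ => Real.log (1/q)) (𝓝[Set.Ioo (0:ℝ) 1] 1)
      (𝓝[>] (0:ℝ)) := by
    rw [tendsto_nhdsWithin_iff]
    constructor
    · simp only [one_div, Real.log_inv]
      have h := ((Real.continuousAt_log one_ne_zero).neg).tendsto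
      simp only [Pi.neg_apply, Real.log_one, neg_zero] at h
      exact h.mono_left nhdsWithin_le_nhds
    · filter_upwards [self_mem_nhdsWithin] with q hq
      exact Set.mem_Ioi.mpr (Real.log_pos (by rw [one_lt_div hq.1]; exact hq.2))
  have hcomp : Tendsto (fun q : ℝ =>
      ((∑' n : ℤ, Real.exp (-(zpi - Real.pi * n) ^ 2 / Real.log (1/q))) /
        (Real.exp (-zpi ^ 2 / Real.log (1/q)) +
          Real.exp (-(Real.pi - zpi) ^ 2 / Real.log (1/q)))))
      (𝓝[Set.Ioo (0:ℝ) 1] 1) (𝓝 1) := (real_limit h0 h1).comp hc_tendsto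
  have hcomplex : Tendsto (fun q : ℝ =>
      ((((∑' n : ℤ, Real.exp (-(zpi - Real.pi * n) ^ 2 / Real.log (1/q))) /
        (Real.exp (-zpi ^ 2 / Real.log (1/q)) +
          Real.exp (-(Real.pi - zpi) ^ 2 / Real.log (1/q)))) : ℝ) : ℂ))
      (𝓝[Set.Ioo (0:ℝ) 1] 1) (𝓝 1) := by
    have h := (Complex.continuous_ofReal.tendsto 1).comp hcomp
    simpa only [Function.comp_def, Complex.ofReal_one] using h
  apply hcomplex.congr'
  filter_upwards [self_mem_nhdsWithin] with q hq
  obtain ⟨hq0, hq1⟩ := hq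
  have hc : 0 < Real.log (1/q) := Real.log_pos (by rw [one_lt_div hq0]; exact hq1)
  set c := Real.log (1/q) with hcdef
  have hlogq : Real.log q = -c := by
    rw [hcdef, one_div, Real.log_inv, neg_neg]
  have hre : (∑' n : ℤ, Real.exp (-(z - Real.pi * n) ^ 2 / c))
      = ∑' n : ℤ, Real.exp (-(zpi - Real.pi * n) ^ 2 / c) := by
    rw [← (Equiv.addRight m).tsum_eq (fun n : ℤ => Real.exp (-(z - Real.pi * n) ^ 2 / c))]
    refine tsum_congr fun n => ?_
    congr 2
    simp only [Equiv.coe_addRight]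
    rw [hzpi]
    push_cast
    ring
  rw [theta3_eq z hq0 hq1, ← hcdef, hre, hlogq]
  have hd1 : zpi ^ 2 / (-c) = -zpi ^ 2 / c := by ring
  have hd2 : (Real.pi - zpi) ^ 2 / (-c) = -(Real.pi - zpi) ^ 2 / c := by ring
  rw [hd1, hd2, ← Complex.ofReal_div]
  congr 1
  have hsne : Real.sqrt (Real.pi / c) ≠ 0 := by positivity
  rw [mul_div_mul_left _ _ hsne]
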